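/- Suppose gcd(a−b, 12k) = 1 and either 2a−3b ≡ 6k (mod 12k) or 3a−2b ≡ 6k (mod 12k). Then Cay(ℤ₁₂ₖ; 6k, a, b) has no hamiltonian circuit. -/

import Mathlib

open Finset Equiv Equiv.Perm

lemma core_lemma (k : ℕ) (hk : 1 ≤ k) (σ : Equiv.Perm (ZMod (12 * k)))
    (hstep : ∀ v : ZMod (12 * k), σ v - v ∈
      ({((6 * k : ℕ) : ZMod (12 * k)), ((6 * k : ℕ) : ZMod (12 * k)) + 2,
        ((6 * k : ℕ) : ZMod (12 * k)) + 3} : Set (ZMod (12 * k))))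
    (htrans : ∀ v w : ZMod (12 * k), ∃ i : ℕ, (σ ^ i) v = w) : False := by
  classical
  haveI : NeZero (12 * k) := ⟨by omega⟩
  set M : ZMod (12 * k) := ((6 * k : ℕ) : ZMod (12 * k)) with hMdef
  -- basic nonvanishing facts
  have hdvdlt : ∀ m : ℕ, 0 < m → m < 12 * k → ((m : ℕ) : ZMod (12 * k)) ≠ 0 := by
    intro m hm hlt h
    rw [ZMod.natCast_eq_zero_iff] at h
    exact absurd (Nat.le_of_dvd hm h) (by omega)
  have h1 : (1 : ZMod (12 * k)) ≠ 0 := by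
    have := hdvdlt 1 (by omega) (by omega); simpa using this
  have h2 : (2 : ZMod (12 * k)) ≠ 0 := by
    have := hdvdlt 2 (by omega) (by omega); simpa using this
  have h3 : (3 : ZMod (12 * k)) ≠ 0 := by
    have := hdvdlt 3 (by omega) (by omega); simpa using this
  have hM2 : M + M = 0 := by
    rw [hMdef, ← Nat.cast_add, show 6 * k + 6 * k = 12 * k by ring, ZMod.natCast_self]
  -- step function
  set f : ZMod (12 * k) → ZMod (12 * k) := fun v => σ v - v with hfdef
  have hσapp : ∀ v, σ v = v + f v := by intro v; simp [hfdef]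
  have tri : ∀ v, f v = M ∨ f v = M + 2 ∨ f v = M + 3 := by
    intro v
    have := hstep v
    simpa [Set.mem_insert_iff, hfdef] using this
  have hMne2 : M ≠ M + 2 := by
    intro h; apply h2; nth_rewrite 1 [← add_zero M] at h; exact (add_left_cancel h).symm
  have hMne3 : M ≠ M + 3 := by
    intro h; apply h3; nth_rewrite 1 [← add_zero M] at h; exact (add_left_cancel h).symm
  have h2ne3 : M + 2 ≠ M + 3 := by
    intro h
    have h23 : (2 : ZMod (12 * k)) = 3 := add_left_cancel h
    apply h1
    have : (3 : ZMod (12 * k)) - 2 = 1 := by norm_num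
    rw [← this, ← h23]; ring
  have hMne0 : M ≠ 0 := by rw [hMdef]; exact hdvdlt (6 * k) (by omega) (by omega)
  have hM2ne0 : M + 2 ≠ 0 := by
    have e : M + 2 = ((6 * k + 2 : ℕ) : ZMod (12 * k)) := by rw [hMdef]; push_cast; ring
    rw [e]; exact hdvdlt (6 * k + 2) (by omega) (by omega)
  have hM3ne0 : M + 3 ≠ 0 := by
    have e : M + 3 = ((6 * k + 3 : ℕ) : ZMod (12 * k)) := by rw [hMdef]; push_cast; ring
    rw [e]; exact hdvdlt (6 * k + 3) (by omega) (by omega)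
  have hfne0 : ∀ v, f v ≠ 0 := by
    intro v h
    rcases tri v with hh | hh | hh
    · exact hMne0 (hh.symm.trans h)
    · exact hM2ne0 (hh.symm.trans h)
    · exact hM3ne0 (hh.symm.trans h)
  -- weight function
  set s : ZMod (12 * k) → ℕ := fun v => if f v = M then 0 else if f v = M + 2 then 2 else 3
    with hsdef
  have hfs : ∀ v, f v = M + (s v : ZMod (12 * k)) := by
    intro v
    rcases tri v with h | h | h
    · simp [hsdef, h]
    · rw [hsdef]; simp only [h, if_neg (Ne.symm hMne2), if_pos rfl]; push_cast; ring
    · rw [hsdef]; simp only [h, if_neg (Ne.symm hMne3), if_neg (Ne.symm h2ne3)]; push_cast; ring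
  have hsle : ∀ v, s v ≤ 3 := by
    intro v; rw [hsdef]; dsimp only; split_ifs <;> omega
  -- total sum of steps vanishes
  have hsum0 : ∑ v : ZMod (12 * k), f v = 0 := by
    have h1' : ∑ v : ZMod (12 * k), σ v = ∑ v : ZMod (12 * k), v :=
      Equiv.sum_comp σ (fun x => x)
    rw [hfdef]
    rw [Finset.sum_sub_distrib, h1', sub_self]
  set S : ℕ := ∑ v : ZMod (12 * k), s v with hSdef
  have hcard : Fintype.card (ZMod (12 * k)) = 12 * k := ZMod.card _
  have hScast : ((S : ℕ) : ZMod (12 * k)) = 0 := by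
    have e1 : ∑ v : ZMod (12 * k), f v
        = ∑ v : ZMod (12 * k), (M + (s v : ZMod (12 * k))) :=
      Finset.sum_congr rfl (fun v _ => hfs v)
    rw [Finset.sum_add_distrib, Finset.sum_const, Finset.card_univ, hcard] at e1
    rw [hsum0] at e1
    have e2 : (12 * k) • M = 0 := by
      rw [nsmul_eq_mul, hMdef, ← Nat.cast_mul]
      have : ((12 * k : ℕ) : ZMod (12 * k)) = 0 := ZMod.natCast_self _
      calc ((12 * k * (6 * k) : ℕ) : ZMod (12 * k))
          = ((12 * k : ℕ) : ZMod (12 * k)) * ((6 * k : ℕ) : ZMod (12 * k)) := by push_cast; ring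
        _ = 0 := by rw [this, zero_mul]
    rw [e2, zero_add, ← Nat.cast_sum] at e1
    exact e1.symm
  have hSdvd : 12 * k ∣ S := (ZMod.natCast_eq_zero_iff S (12 * k)).1 hScast
  have hSle : S ≤ 3 * (12 * k) := by
    have : S ≤ (Finset.univ : Finset (ZMod (12 * k))).card * 3 := by
      rw [hSdef]
      calc ∑ v : ZMod (12 * k), s v ≤ ∑ _v : ZMod (12 * k), 3 :=
            Finset.sum_le_sum (fun v _ => hsle v)
        _ = (Finset.univ : Finset (ZMod (12 * k))).card * 3 := by
            rw [Finset.sum_const, smul_eq_mul]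
    rw [Finset.card_univ, hcard] at this
    omega
  obtain ⟨c, hc⟩ := hSdvd
  have hc3 : c ≤ 3 := by
    by_contra hgt
    push_neg at hgt
    have : 12 * k * 4 ≤ 12 * k * c := Nat.mul_le_mul_left _ (by omega)
    omega
  have hS' : ∑ v : ZMod (12 * k), s v = S := hSdef.symm
  interval_cases c
  · -- S = 0 : all steps equal M, σ is the involution-translation
    have hS0 : ∑ v : ZMod (12 * k), s v = 0 := by omega
    have hz : ∀ v, s v = 0 := fun v =>
      (Finset.sum_eq_zero_iff.1 hS0) v (Finset.mem_univ v)
    have hfM : ∀ v, f v = M := by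
      intro v
      rcases tri v with h | h | h
      · exact h
      · exfalso; have := hz v; simp [hsdef, h, Ne.symm hMne2] at this
      · exfalso; have := hz v
        simp [hsdef, h, Ne.symm hMne3, Ne.symm h2ne3] at this
    have hpow : ∀ i : ℕ, (σ ^ i) 0 = i • M := by
      intro i
      induction i with
      | zero => simp
      | succ n ih =>
        rw [pow_succ', Equiv.Perm.mul_apply, ih, hσapp, hfM, succ_nsmul]
    obtain ⟨i, hi⟩ := htrans 0 1
    rw [hpow] at hi
    have hmul : (2 : ZMod (12 * k)) * (i • M) = 2 * 1 := by rw [hi]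
    rw [mul_smul_comm, show (2 : ZMod (12 * k)) * M = M + M by ring, hM2,
      smul_zero, mul_one] at hmul
    exact h2 hmul.symm
  · -- S = 12k : all steps even, parity obstruction
    have hno00 : ∀ v, ¬(f v = M ∧ f (σ v) = M) := by
      rintro v ⟨hv1, hv2⟩
      have hσ2 : σ (σ v) = v := by
        rw [hσapp (σ v), hv2, hσapp v, hv1, add_assoc, hM2, add_zero]
      have horb : ∀ i : ℕ, (σ ^ i) v = v ∨ (σ ^ i) v = σ v := by
        intro i
        induction i with
        | zero => left; simp
        | succ n ih =>
          rcases ih with h | h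
          · right; rw [pow_succ', Equiv.Perm.mul_apply, h]
          · left; rw [pow_succ', Equiv.Perm.mul_apply, h, hσ2]
      have hsub : (Finset.univ : Finset (ZMod (12 * k))) ⊆ {v, σ v} := by
        intro w _
        obtain ⟨i, hi⟩ := htrans v w
        rcases horb i with h | h <;> rw [hi] at h <;> simp [h]
      have hle : 12 * k ≤ 2 := by
        calc 12 * k = (Finset.univ : Finset (ZMod (12 * k))).card := by
              rw [Finset.card_univ, hcard]
          _ ≤ ({v, σ v} : Finset (ZMod (12 * k))).card := Finset.card_le_card hsub
          _ ≤ 2 := by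
              refine (Finset.card_insert_le _ _).trans ?_
              simp
      omega
    have hcomp : ∑ v : ZMod (12 * k), s (σ v) = ∑ v : ZMod (12 * k), s v :=
      Equiv.sum_comp σ s
    have hdsum : ∑ v : ZMod (12 * k), (2 : ℕ) = ∑ v : ZMod (12 * k), (s v + s (σ v)) := by
      rw [Finset.sum_add_distrib, hcomp, Finset.sum_const, Finset.card_univ, hcard,
        smul_eq_mul, hS']
      omega
    have hd2 : ∀ v ∈ (Finset.univ : Finset (ZMod (12 * k))), (2 : ℕ) ≤ s v + s (σ v) := by
      intro v _
      rcases tri v with h | h | h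
      · have hne : f (σ v) ≠ M := fun hh => hno00 v ⟨h, hh⟩
        have : s (σ v) = 2 ∨ s (σ v) = 3 := by
          rcases tri (σ v) with h' | h' | h'
          · exact absurd h' hne
          · left; simp [hsdef, h', Ne.symm hMne2]
          · right; simp [hsdef, h', Ne.symm hMne3, Ne.symm h2ne3]
        omega
      · have : s v = 2 := by simp [hsdef, h, Ne.symm hMne2]
        omega
      · have : s v = 3 := by simp [hsdef, h, Ne.symm hMne3, Ne.symm h2ne3]
        omega
    have hdeq : ∀ v, (2 : ℕ) = s v + s (σ v) := by
      have := (Finset.sum_eq_sum_iff_of_le hd2).1 hdsum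
      exact fun v => this v (Finset.mem_univ v)
    have heven : ∀ v, f v = M ∨ f v = M + 2 := by
      intro v
      rcases tri v with h | h | h
      · exact Or.inl h
      · exact Or.inr h
      · exfalso
        have hs3 : s v = 3 := by simp [hsdef, h, Ne.symm hMne3, Ne.symm h2ne3]
        have := hdeq v
        omega
    have hdvd2 : (2 : ℕ) ∣ 12 * k := ⟨6 * k, by ring⟩
    set φ := ZMod.castHom hdvd2 (ZMod 2) with hφdef
    have hφM : φ M = 0 := by
      rw [hMdef, map_natCast]
      exact (ZMod.natCast_eq_zero_iff _ _).2 ⟨3 * k, by ring⟩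
    have hφf : ∀ v, φ (f v) = 0 := by
      intro v
      rcases heven v with h | h <;> rw [h]
      · exact hφM
      · rw [map_add, hφM, zero_add,
          show ((2 : ZMod (12 * k))) = ((2 : ℕ) : ZMod (12 * k)) by push_cast; rfl,
          map_natCast]
        decide
    have hφpow : ∀ i : ℕ, φ ((σ ^ i) 0) = 0 := by
      intro i
      induction i with
      | zero => simp
      | succ n ih =>
        rw [pow_succ', Equiv.Perm.mul_apply, hσapp, map_add, ih, hφf, zero_add]
    obtain ⟨i, hi⟩ := htrans 0 1
    have := hφpow i
    rw [hi, map_one] at this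
    exact one_ne_zero this
  · -- S = 24k : sign obstruction
    set Q : Finset (ZMod (12 * k)) := Finset.univ.filter (fun v => f v = M + 3) with hQdef
    have hsplit : ∀ v, s v = 2 * (if f v = M then 0 else 1) +
        (if f v = M + 3 then 1 else 0) := by
      intro v
      rcases tri v with h | h | h
      · simp [hsdef, h, hMne3]
      · rw [hsdef]
        simp only [h, if_neg (Ne.symm hMne2), if_pos rfl, if_neg h2ne3]
        norm_num
      · rw [hsdef]
        simp only [h, if_neg (Ne.symm hMne3), if_neg (Ne.symm h2ne3), if_pos rfl]
        norm_num
    have hqcard : ∑ v : ZMod (12 * k), (if f v = M + 3 then (1 : ℕ) else 0) = Q.card := by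
      rw [hQdef, Finset.card_filter]
    have hTsplit : S = 2 * (∑ v : ZMod (12 * k), (if f v = M then 0 else 1)) + Q.card := by
      rw [hSdef, ← hqcard, Finset.mul_sum, ← Finset.sum_add_distrib]
      exact Finset.sum_congr rfl (fun v _ => hsplit v)
    have hQle : Q.card ≤ 12 * k := by
      calc Q.card ≤ (Finset.univ : Finset (ZMod (12 * k))).card := Finset.card_filter_le _ _
        _ = 12 * k := by rw [Finset.card_univ, hcard]
    have hQ2 : Q.card % 2 = 0 := by omega
    -- the auxiliary permutation
    set c0 : ZMod (12 * k) := ((6 * k - 3 : ℕ) : ZMod (12 * k)) with hc0def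
    have hc03 : c0 + 3 = M := by
      rw [hc0def, hMdef, show (3 : ZMod (12 * k)) = ((3 : ℕ) : ZMod (12 * k)) by norm_num,
        ← Nat.cast_add, show 6 * k - 3 + 3 = 6 * k by omega]
    have hc0M3 : c0 + (M + 3) = 0 := by
      calc c0 + (M + 3) = (c0 + 3) + M := by ring
        _ = M + M := by rw [hc03]
        _ = 0 := hM2
    set π : Equiv.Perm (ZMod (12 * k)) := (Equiv.addLeft c0) * σ with hπdef
    have hπapp : ∀ v, π v = c0 + σ v := fun v => rfl
    have hfix : ∀ v, π v = v ↔ f v = M + 3 := by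
      intro v
      rw [hπapp]
      constructor
      · intro h
        have h1' : f v = -c0 := by
          rw [hfdef]; dsimp only; linear_combination h
        have h2' : M + 3 = -c0 := by linear_combination hc0M3
        rw [h1', h2']
      · intro h
        have h1' : σ v = v + (M + 3) := by rw [hσapp, h]
        rw [h1']
        calc c0 + (v + (M + 3)) = v + (c0 + (M + 3)) := by ring
          _ = v := by rw [hc0M3, add_zero]
    set w : ZMod (12 * k) → ℤ :=
      fun v => if f v = M then -3 else if f v = M + 2 then -1 else 0 with hwdef
    have hwcast : ∀ v, ((w v : ℤ) : ZMod (12 * k)) = π v - v := by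
      intro v
      have hπv : π v - v = c0 + f v := by
        rw [hπapp, hfdef]; dsimp only; ring
      rcases tri v with h | h | h
      · rw [hwdef]; dsimp only; rw [if_pos h, hπv, h]
        have e : c0 + M = -(3 : ZMod (12 * k)) := by
          have e0 : (c0 + 3) + M = 0 := by rw [hc03]; exact hM2
          linear_combination e0
        rw [e]
        push_cast; ring
      · rw [hwdef]; dsimp only
        rw [if_neg (fun hh => hMne2 (hh.symm.trans h)), if_pos h, hπv, h]
        have e : c0 + (M + 2) = -(1 : ZMod (12 * k)) := by
          have e0 : (c0 + 3) + M = 0 := by rw [hc03]; exact hM2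
          linear_combination e0
        rw [e]
        push_cast; ring
      · rw [hwdef]; dsimp only
        rw [if_neg (fun hh => hMne3 (hh.symm.trans h)),
          if_neg (fun hh => h2ne3 (hh.symm.trans h)), hπv, h, hc0M3]
        push_cast; ring
    have hwnonpos : ∀ v, w v ≤ 0 := by
      intro v; rw [hwdef]; dsimp only; split_ifs <;> omega
    have hws : ∀ v, w v = (s v : ℤ) - 3 := by
      intro v; rw [hwdef, hsdef]; dsimp only; split_ifs <;> norm_num
    have hwtotal : ∑ v : ZMod (12 * k), w v = -(12 * (k : ℤ)) := by
      have e1 : ∑ v : ZMod (12 * k), w v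
          = (∑ v : ZMod (12 * k), (s v : ℤ)) - ∑ _v : ZMod (12 * k), (3 : ℤ) := by
        rw [← Finset.sum_sub_distrib]
        exact Finset.sum_congr rfl (fun v _ => hws v)
      rw [Finset.sum_const, Finset.card_univ, hcard, nsmul_eq_mul] at e1
      have e2 : ∑ v : ZMod (12 * k), (s v : ℤ) = (S : ℤ) := by
        rw [hSdef]; push_cast; rfl
      rw [e2, hc] at e1
      rw [e1]; push_cast; ring
    have hinvdvd : ∀ T : Finset (ZMod (12 * k)), (∀ v, v ∈ T ↔ π v ∈ T) →
        (12 * (k : ℤ)) ∣ ∑ v ∈ T, w v := by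
      intro T hT
      have himg : T.image π = T := by
        apply Finset.eq_of_subset_of_card_le
        · intro x hx
          obtain ⟨y, hy, rfl⟩ := Finset.mem_image.1 hx
          exact (hT y).1 hy
        · rw [Finset.card_image_of_injective _ π.injective]
      have hsumeq : ∑ v ∈ T, π v = ∑ v ∈ T, v := by
        conv_rhs => rw [← himg]
        rw [Finset.sum_image (fun x _ y _ h => π.injective h)]
      have hzero : ((∑ v ∈ T, w v : ℤ) : ZMod (12 * k)) = 0 := by
        push_cast
        rw [Finset.sum_congr rfl (fun v _ => hwcast v), Finset.sum_sub_distrib, hsumeq,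
          sub_self]
      have := (ZMod.intCast_zmod_eq_zero_iff_dvd _ _).1 hzero
      push_cast at this
      exact this
    have hk' : (1 : ℤ) ≤ (k : ℤ) := by exact_mod_cast hk
    have hex : ∃ v0, π v0 ≠ v0 := by
      by_contra hall
      push_neg at hall
      have hz : ∀ v, w v = 0 := by
        intro v
        have h3' := (hfix v).1 (hall v)
        rw [hwdef]; dsimp only
        rw [if_neg (fun hh => hMne3 (hh.symm.trans h3')),
          if_neg (fun hh => h2ne3 (hh.symm.trans h3'))]
      rw [Finset.sum_congr rfl (fun v _ => hz v), Finset.sum_const_zero] at hwtotal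
      linarith
    obtain ⟨v0, hv0⟩ := hex
    have hCinv : ∀ v u, u ∈ Finset.univ.filter (π.SameCycle v) ↔
        π u ∈ Finset.univ.filter (π.SameCycle v) := by
      intro v u
      simp only [Finset.mem_filter, Finset.mem_univ, true_and]
      exact (Equiv.Perm.sameCycle_apply_right).symm
    have hCsum : ∀ v, π v ≠ v →
        ∑ u ∈ Finset.univ.filter (π.SameCycle v), w u ≤ -(12 * (k : ℤ)) := by
      intro v hv
      obtain ⟨t, ht⟩ := hinvdvd _ (hCinv v)
      have hvmem : v ∈ Finset.univ.filter (π.SameCycle v) := by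
        simp [Equiv.Perm.SameCycle.refl]
      have hwv : w v ≤ -1 := by
        have hne3 : f v ≠ M + 3 := fun h => hv ((hfix v).2 h)
        rcases tri v with h | h | h
        · rw [hwdef]; dsimp only; rw [if_pos h]; omega
        · rw [hwdef]; dsimp only
          rw [if_neg (fun hh => hMne2 (hh.symm.trans h)), if_pos h]
        · exact absurd h hne3
      have hsumneg : ∑ u ∈ Finset.univ.filter (π.SameCycle v), w u ≤ -1 := by
        have he := Finset.sum_erase_add (Finset.univ.filter (π.SameCycle v)) w hvmem
        have herase : ∑ u ∈ (Finset.univ.filter (π.SameCycle v)).erase v, w u ≤ 0 :=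
          Finset.sum_nonpos (fun u _ => hwnonpos u)
        linarith
      rw [ht] at hsumneg ⊢
      have htneg : t ≤ -1 := by
        by_contra hpos
        push_neg at hpos
        have h0t : (0 : ℤ) ≤ t := by linarith
        have : (0 : ℤ) ≤ 12 * (k : ℤ) * t := mul_nonneg (by linarith) h0t
        linarith
      calc 12 * (k : ℤ) * t ≤ 12 * (k : ℤ) * (-1) :=
            mul_le_mul_of_nonneg_left htneg (by linarith)
        _ = -(12 * (k : ℤ)) := by ring
    have hsame : ∀ u, π u ≠ u → π.SameCycle v0 u := by
      intro u hu
      by_contra hnc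
      have hdisj : Disjoint (Finset.univ.filter (π.SameCycle v0))
          (Finset.univ.filter (π.SameCycle u)) := by
        rw [Finset.disjoint_left]
        intro x hx hx'
        simp only [Finset.mem_filter, Finset.mem_univ, true_and] at hx hx'
        exact hnc (hx.trans hx'.symm)
      have hsub : (Finset.univ.filter (π.SameCycle v0)) ∪ (Finset.univ.filter (π.SameCycle u))
          ⊆ Finset.univ := Finset.subset_univ _
      have hsd := Finset.sum_sdiff (f := w) hsub
      have hnonpos : ∑ x ∈ Finset.univ \
          ((Finset.univ.filter (π.SameCycle v0)) ∪ (Finset.univ.filter (π.SameCycle u))), w x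
          ≤ 0 := Finset.sum_nonpos (fun x _ => hwnonpos x)
      have hunion : ∑ x ∈ (Finset.univ.filter (π.SameCycle v0)) ∪
          (Finset.univ.filter (π.SameCycle u)), w x ≤ -(24 * (k : ℤ)) := by
        rw [Finset.sum_union hdisj]
        have h1' := hCsum v0 hv0
        have h2' := hCsum u hu
        linarith
      rw [hwtotal] at hsd
      linarith
    have hcyc : π.IsCycle := ⟨v0, hv0, fun y hy => hsame y hy⟩
    have hsupp : π.support = Finset.univ.filter (fun v => ¬ f v = M + 3) := by
      ext v
      simp only [Equiv.Perm.mem_support, Finset.mem_filter, Finset.mem_univ, true_and]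
      exact not_congr (hfix v)
    have hfil := Finset.card_filter_add_card_filter_not
      (s := (Finset.univ : Finset (ZMod (12 * k)))) (fun v => f v = M + 3)
    rw [Finset.card_univ, hcard] at hfil
    have hsuppcard : π.support.card = 12 * k - Q.card := by
      rw [hsupp, hQdef] at *
      omega
    -- sign computations
    have hσcyc : σ.IsCycle := by
      refine ⟨0, ?_, ?_⟩
      · intro h
        exact hfne0 0 (by rw [hfdef]; dsimp only; rw [h, sub_self])
      · intro y _
        obtain ⟨i, hi⟩ := htrans 0 y
        exact ⟨(i : ℤ), by rw [zpow_natCast]; exact hi⟩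
    have hσsupp : σ.support = Finset.univ := by
      apply Finset.eq_univ_of_forall
      intro v
      rw [Equiv.Perm.mem_support]
      intro h
      exact hfne0 v (by rw [hfdef]; dsimp only; rw [h, sub_self])
    have hsgnσ : Equiv.Perm.sign σ = -1 := by
      rw [hσcyc.sign, hσsupp, Finset.card_univ, hcard,
        Even.neg_one_pow ⟨6 * k, by ring⟩]
    have hτ1cyc : (Equiv.addLeft (1 : ZMod (12 * k))).IsCycle := by
      refine ⟨0, by simpa using h1, ?_⟩
      intro y _
      refine ⟨(y.val : ℤ), ?_⟩
      rw [zpow_natCast, Equiv.nsmul_addLeft]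
      show (y.val : ℕ) • (1 : ZMod (12 * k)) + 0 = y
      rw [add_zero, nsmul_eq_mul, mul_one]
      exact ZMod.natCast_rightInverse y
    have hτ1supp : (Equiv.addLeft (1 : ZMod (12 * k))).support = Finset.univ := by
      apply Finset.eq_univ_of_forall
      intro v
      rw [Equiv.Perm.mem_support]
      intro h
      have : (1 : ZMod (12 * k)) + v = 0 + v := by
        rw [zero_add]; exact h
      exact h1 (add_right_cancel this)
    have hsgnτ1 : Equiv.Perm.sign (Equiv.addLeft (1 : ZMod (12 * k))) = -1 := by
      rw [hτ1cyc.sign, hτ1supp, Finset.card_univ, hcard,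
        Even.neg_one_pow ⟨6 * k, by ring⟩]
    have haddc0 : Equiv.addLeft c0 = (Equiv.addLeft (1 : ZMod (12 * k))) ^ (6 * k - 3) := by
      rw [Equiv.nsmul_addLeft, nsmul_eq_mul, mul_one, hc0def]
    have hsgnτ : Equiv.Perm.sign (Equiv.addLeft c0) = -1 := by
      rw [haddc0, map_pow, hsgnτ1, Odd.neg_one_pow ⟨3 * k - 2, by omega⟩]
    have hsgnπ : Equiv.Perm.sign π = 1 := by
      rw [hπdef, map_mul, hsgnτ, hsgnσ]
      norm_num
    have hsgnπ' : Equiv.Perm.sign π = -1 := by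
      rw [hcyc.sign, hsuppcard, Even.neg_one_pow
        ((Nat.even_sub hQle).2 (iff_of_true ⟨6 * k, by ring⟩ (Nat.even_iff.2 hQ2)))]
    rw [hsgnπ] at hsgnπ'
    have : ((1 : ℤˣ) : ℤ) = ((-1 : ℤˣ) : ℤ) := congrArg Units.val hsgnπ'
    norm_num at this
  · -- S = 36k : all steps equal M + 3
    have hS3 : ∑ v : ZMod (12 * k), s v = ∑ _v : ZMod (12 * k), 3 := by
      rw [Finset.sum_const, Finset.card_univ, hcard, smul_eq_mul]; omega
    have hall : ∀ v, s v = 3 := by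
      have := (Finset.sum_eq_sum_iff_of_le (fun v _ => hsle v)).1 hS3
      exact fun v => this v (Finset.mem_univ v)
    have hfM3 : ∀ v, f v = M + 3 := by
      intro v
      rcases tri v with h | h | h
      · exfalso; have := hall v; simp [hsdef, h] at this
      · exfalso; have := hall v; simp [hsdef, h, Ne.symm hMne2] at this
      · exact h
    have hpow : ∀ i : ℕ, (σ ^ i) 0 = i • (M + 3) := by
      intro i
      induction i with
      | zero => simp
      | succ n ih =>
        rw [pow_succ', Equiv.Perm.mul_apply, ih, hσapp, hfM3, succ_nsmul]
    obtain ⟨i, hi⟩ := htrans 0 1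
    rw [hpow] at hi
    have hM3 : ((4 * k : ℕ) : ZMod (12 * k)) * (M + 3) = 0 := by
      rw [hMdef]
      have e : ((4 * k : ℕ) : ZMod (12 * k)) * (((6 * k : ℕ) : ZMod (12 * k)) + 3)
          = ((4 * k * (6 * k + 3) : ℕ) : ZMod (12 * k)) := by push_cast; ring
      rw [e, show 4 * k * (6 * k + 3) = 12 * k * (2 * k + 1) by ring, Nat.cast_mul,
        ZMod.natCast_self, zero_mul]
    have hmul : ((4 * k : ℕ) : ZMod (12 * k)) * (i • (M + 3))
        = ((4 * k : ℕ) : ZMod (12 * k)) * 1 := by rw [hi]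
    rw [mul_smul_comm, hM3, smul_zero, mul_one] at hmul
    have : 12 * k ∣ 4 * k := (ZMod.natCast_eq_zero_iff _ _).1 hmul.symm
    have := Nat.le_of_dvd (by omega) this
    omega

/-- If `gcd(a − b, 12k) = 1` and either `2a − 3b ≡ 6k (mod 12k)` or
`3a − 2b ≡ 6k (mod 12k)`, then `Cay(ℤ₁₂ₖ; 6k, a, b)` has no hamiltonian circuit. -/
theorem no_ham_circuit_general (k : ℕ) (hk : 1 ≤ k) (a b : ZMod (12 * k))
    (hgcd : Nat.gcd (a - b).val (12 * k) = 1)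
    (hcong : 2 * a - 3 * b = ((6 * k : ℕ) : ZMod (12 * k)) ∨
             3 * a - 2 * b = ((6 * k : ℕ) : ZMod (12 * k))) :
    ¬ ∃ σ : Equiv.Perm (ZMod (12 * k)),
      (∀ v : ZMod (12 * k), σ v - v ∈
        ({((6 * k : ℕ) : ZMod (12 * k)), a, b} : Set (ZMod (12 * k)))) ∧
      (∀ v w : ZMod (12 * k), ∃ i : ℕ, (σ ^ i) v = w) := by
  rintro ⟨σ, hstep, htrans⟩
  haveI : NeZero (12 * k) := ⟨by omega⟩
  set M : ZMod (12 * k) := ((6 * k : ℕ) : ZMod (12 * k)) with hMdef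
  have hM2 : M + M = 0 := by
    rw [hMdef, ← Nat.cast_add, show 6 * k + 6 * k = 12 * k by ring, ZMod.natCast_self]
  -- the difference a - b is a unit
  have hδunit : IsUnit (a - b) := by
    have h0 := (ZMod.isUnit_iff_coprime (a - b).val (12 * k)).2 hgcd
    rwa [ZMod.natCast_rightInverse (a - b)] at h0
  obtain ⟨u, hu⟩ : ∃ u, (a - b) * u = 1 := hδunit.exists_right_inv
  -- multiplication by a unit fixes M
  have hMx : ∀ x : ZMod (12 * k), (a - b) * x = 1 → M * x = M := by
    intro x hx
    have hdvd2 : (2 : ℕ) ∣ 12 * k := ⟨6 * k, by ring⟩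
    set φ := ZMod.castHom hdvd2 (ZMod 2) with hφdef
    have hφx : φ x = 1 := by
      have h1 : φ (a - b) * φ x = 1 := by rw [← map_mul, hx, map_one]
      have htwo : ∀ y : ZMod 2, y = 0 ∨ y = 1 := by decide
      rcases htwo (φ x) with h | h
      · rw [h, mul_zero] at h1
        exact absurd h1 (by decide)
      · exact h
    have hφx1 : φ (x - 1) = 0 := by rw [map_sub, hφx, map_one, sub_self]
    have hval : (((x - 1).val : ℕ) : ZMod 2) = 0 := by
      have e : (((x - 1).val : ℕ) : ZMod (12 * k)) = x - 1 := ZMod.natCast_rightInverse _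
      calc (((x - 1).val : ℕ) : ZMod 2) = φ (((x - 1).val : ℕ) : ZMod (12 * k)) := by
            rw [map_natCast]
        _ = φ (x - 1) := by rw [e]
        _ = 0 := hφx1
    obtain ⟨m, hm⟩ := (ZMod.natCast_eq_zero_iff _ _).1 hval
    have hx1 : x - 1 = ((2 * m : ℕ) : ZMod (12 * k)) := by
      rw [← hm]
      exact (ZMod.natCast_rightInverse _).symm
    have hM0 : M * (x - 1) = 0 := by
      rw [hx1, hMdef, ← Nat.cast_mul, show 6 * k * (2 * m) = 12 * k * m by ring,
        Nat.cast_mul, ZMod.natCast_self, zero_mul]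
    linear_combination hM0
  have hMu : M * u = M := hMx u hu
  -- normalize the two steps to M+2, M+3
  have key : ∃ w winv : ZMod (12 * k), w * winv = 1 ∧ M * w = M ∧
      (w * a ∈ ({M, M + 2, M + 3} : Set (ZMod (12 * k)))) ∧
      (w * b ∈ ({M, M + 2, M + 3} : Set (ZMod (12 * k)))) := by
    rcases hcong with hc | hc
    · refine ⟨u, a - b, (mul_comm u (a - b)).trans hu, hMu, ?_, ?_⟩
      · have : u * a = M + 3 := by linear_combination 3 * hu - u * hc - hMu - hM2
        rw [this]; simp
      · have : u * b = M + 2 := by linear_combination 2 * hu - u * hc - hMu - hM2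
        rw [this]; simp
    · refine ⟨-u, -(a - b), by rw [neg_mul_neg u (a - b)]; exact (mul_comm u (a - b)).trans hu, ?_, ?_, ?_⟩
      · linear_combination -hMu - hM2
      · have : -u * a = M + 2 := by linear_combination 2 * hu - u * hc - hMu - hM2
        rw [this]; simp
      · have : -u * b = M + 3 := by linear_combination 3 * hu - u * hc - hMu - hM2
        rw [this]; simp
  obtain ⟨w, winv, hw, hwM, hwa, hwb⟩ := key
  -- the rescaling permutation
  set μ : Equiv.Perm (ZMod (12 * k)) :=
    { toFun := fun v => w * v
      invFun := fun v => winv * v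
      left_inv := fun v => by
        show winv * (w * v) = v
        rw [← mul_assoc, mul_comm winv w, hw, one_mul]
      right_inv := fun v => by
        show w * (winv * v) = v
        rw [← mul_assoc, hw, one_mul] } with hμdef
  have hμapp : ∀ v, μ v = w * v := fun v => rfl
  set σ' : Equiv.Perm (ZMod (12 * k)) := (μ.symm.trans σ).trans μ with hσ'def
  have hσ'app : ∀ v, σ' v = μ (σ (μ.symm v)) := fun v => rfl
  have hσ'step : ∀ v, σ' v - v ∈ ({M, M + 2, M + 3} : Set (ZMod (12 * k))) := by
    intro v
    have hv : μ (μ.symm v) = v := μ.apply_symm_apply v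
    have hy : σ' v - v = w * (σ (μ.symm v) - μ.symm v) := by
      calc σ' v - v = μ (σ (μ.symm v)) - μ (μ.symm v) := by rw [hv]; rfl
        _ = w * (σ (μ.symm v)) - w * (μ.symm v) := rfl
        _ = w * (σ (μ.symm v) - μ.symm v) := (mul_sub _ _ _).symm
    rw [hy]
    have hmem := hstep (μ.symm v)
    simp only [Set.mem_insert_iff, Set.mem_singleton_iff] at hmem
    rcases hmem with h | h | h
    · rw [h, mul_comm w M, hwM]; simp
    · rw [h]; exact hwa
    · rw [h]; exact hwb
  have hσ'pow : ∀ (i : ℕ) (v : ZMod (12 * k)), (σ' ^ i) v = μ ((σ ^ i) (μ.symm v)) := by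
    intro i
    induction i with
    | zero => intro v; simp
    | succ n ih =>
      intro v
      rw [pow_succ', Equiv.Perm.mul_apply, ih, hσ'app, μ.symm_apply_apply]
      exact congrArg μ (by rw [pow_succ' σ n, Equiv.Perm.mul_apply])
  have htrans' : ∀ v v' : ZMod (12 * k), ∃ i : ℕ, (σ' ^ i) v = v' := by
    intro v v'
    obtain ⟨i, hi⟩ := htrans (μ.symm v) (μ.symm v')
    exact ⟨i, by rw [hσ'pow, hi, μ.apply_symm_apply]⟩
  exact core_lemma k hk σ' hσ'step htrans'
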